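/- Let L₁ = { w ∈ {0,1}⁺ : |w| = 2ⁿ for some n and w(i) = 1, where i is the integer with binary representation w(0)w(1)⋯w(n−1) }. Then the one-way communication complexity of the block version Block_n(L₁), with the split placed after the first n blocks (i.e., m(N) = n(n+1)), is at least 2ⁿ − n. -/

import Mathlib

/-- The number given (MSB first) by the first `n` bits of `z`. -/
def idxOf (z : List Bool) (n : ℕ) : ℕ :=
  (z.take n).foldl (fun a b => 2 * a + cond b 1 0) 0

/-- The indexing language: `|w| = 2^n` and `w(i) = 1` where `i` is the number
given by the first `n` bits of `w`. -/
def L1 : Set (List Bool) :=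
  {w | ∃ n : ℕ, w.length = 2 ^ n ∧ w.getD (idxOf w n) false = true}

/-- The block encoding of `z` with block length `n`: block `i` carries
`bin_n(i)` on the upper track and `z(i)` (padded with zeros) on the lower
track; blocks are separated by the delimiter `none`. -/
def blockEnc (n : ℕ) (z : List Bool) : List (Option (Bool × Bool)) :=
  List.intercalate [none] ((List.range z.length).map fun i =>
    List.ofFn fun j : Fin n =>
      some (i.testBit (n - 1 - (j : ℕ)), if (j : ℕ) = 0 then z.getD i false else false))

/-- The block version of `L1` for instance parameter `n`. -/
def BlockL1 (n : ℕ) : Set (List (Option (Bool × Bool))) :=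
  {w | ∃ z : List Bool, z.length = 2 ^ n ∧ z ∈ L1 ∧ w = blockEnc n z}

private theorem my_intercalate_cons {α : Type*} (s a : List α) (l : List (List α)) (h : l ≠ []) :
    List.intercalate s (a :: l) = a ++ s ++ List.intercalate s l := by
  cases l with
  | nil => simp at h
  | cons b l' => simp [List.intercalate, List.intersperse]

private theorem my_intercalate_length {α : Type*} (x : α) (n : ℕ) :
    ∀ L : List (List α), L ≠ [] → (∀ b ∈ L, b.length = n) →
      (List.intercalate [x] L).length = L.length * (n + 1) - 1 := by
  intro L
  induction L with
  | nil => simp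
  | cons a L ih =>
    intro _ hall
    cases L with
    | nil => simp [List.intercalate, hall a (by simp)]
    | cons b L' =>
      rw [my_intercalate_cons _ _ _ (by simp)]
      have h1 := ih (by simp) (fun b hb => hall b (by simp [hb]))
      simp only [List.length_cons] at h1 ⊢
      have h2 : (L'.length + 1 + 1) * (n + 1) = (L'.length + 1) * (n + 1) + (n + 1) := by ring
      have h3 : 1 ≤ (L'.length + 1) * (n + 1) := Nat.one_le_iff_ne_zero.2 (by positivity)
      simp only [List.length_append, h1, hall a (by simp), List.length_cons,
        List.length_singleton, h2, List.length_nil]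
      omega

private theorem my_intercalate_append {α : Type*} (s : List α) :
    ∀ (L M : List (List α)), L ≠ [] → M ≠ [] →
      List.intercalate s (L ++ M) = List.intercalate s L ++ s ++ List.intercalate s M := by
  intro L
  induction L with
  | nil => simp
  | cons a L ih =>
    intro M _ hM
    cases L with
    | nil =>
      rw [List.singleton_append, my_intercalate_cons _ _ _ hM]
      simp [List.intercalate]
    | cons b L' =>
      rw [List.cons_append, my_intercalate_cons _ _ _ (by simp),
        my_intercalate_cons _ _ _ (by simp), ih M (by simp) hM]
      simp

private theorem my_intercalate_getD {α : Type*} (x d : α) (n : ℕ) :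
    ∀ (L : List (List α)) (i j : ℕ), (∀ b ∈ L, b.length = n) → i < L.length → j < n →
      (List.intercalate [x] L).getD (i * (n+1) + j) d = (L.getD i []).getD j d := by
  intro L
  induction L with
  | nil => simp
  | cons a L ih =>
    intro i j hall hi hj
    cases i with
    | zero =>
      simp only [Nat.zero_mul, Nat.zero_add, List.getD_cons_zero]
      cases L with
      | nil => simp [List.intercalate]
      | cons b L' =>
        rw [my_intercalate_cons _ _ _ (by simp), List.append_assoc,
          List.getD_append _ _ _ _ (by rw [hall a (by simp)]; exact hj)]
    | succ i' =>
      cases L with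
      | nil => simp at hi
      | cons b L' =>
        rw [my_intercalate_cons _ _ _ (by simp)]
        have hlen : (a ++ [x]).length = n + 1 := by simp [hall a (by simp)]
        have harith : (i' + 1) * (n + 1) + j = (a ++ [x]).length + (i' * (n+1) + j) := by
          rw [hlen]; ring
        rw [harith,
          List.getD_append_right _ _ _ _ (Nat.le_add_right _ _), Nat.add_sub_cancel_left]
        exact ih i' j (fun c hc => hall c (by simp [hc])) (by simpa using hi) hj

private def numStep : ℕ → Bool → ℕ := fun a b => 2 * a + cond b 1 0

private theorem numOf_testBit : ∀ (n m : ℕ),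
    (List.ofFn fun j : Fin n => m.testBit (n - 1 - (j : ℕ))).foldl numStep 0 = m % 2 ^ n := by
  intro n
  induction n with
  | zero => intro m; simp [Nat.mod_one]
  | succ n ih =>
    intro m
    have hofn : (List.ofFn fun j : Fin (n+1) => m.testBit (n + 1 - 1 - (j : ℕ)))
        = (List.ofFn fun j : Fin n => (m / 2).testBit (n - 1 - (j : ℕ))).concat (m.testBit 0) := by
      rw [List.ofFn_succ']
      have he : (fun j : Fin n => m.testBit (n + 1 - 1 - ((j.castSucc : Fin (n+1)) : ℕ)))
          = fun j : Fin n => (m / 2).testBit (n - 1 - (j : ℕ)) := by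
        funext j
        have hj : (j : ℕ) < n := j.isLt
        have h2 : n + 1 - 1 - ((j.castSucc : Fin (n+1)) : ℕ) = (n - 1 - (j : ℕ)) + 1 := by
          simp [Fin.coe_castSucc]; omega
        rw [h2, Nat.testBit_succ]
      rw [show (Fin.last n : ℕ) = n from rfl]
      simp only [Fin.coe_castSucc]
      rw [show (fun j : Fin n => m.testBit (n + 1 - 1 - (j : ℕ)))
          = fun j : Fin n => (m / 2).testBit (n - 1 - (j : ℕ)) from he]
      congr 2
      omega
    rw [hofn, List.concat_eq_append, List.foldl_concat, ih (m / 2)]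
    have hbit : (cond (m.testBit 0) 1 0 : ℕ) = m % 2 := by
      rw [Nat.testBit_zero]
      rcases Nat.mod_two_eq_zero_or_one m with h | h <;> simp [h]
    show 2 * (m / 2 % 2 ^ n) + cond (m.testBit 0) 1 0 = m % 2 ^ (n + 1)
    rw [hbit]
    have : m % 2 ^ (n + 1) = m % (2 * 2 ^ n) := by ring_nf
    rw [this, Nat.mod_mul]
    ring

private def gNum (l : List Bool) : ℕ := l.foldl (fun a b => 2 * a + cond b 1 0) 1

private theorem gNum_concat (l : List Bool) (b : Bool) :
    gNum (l ++ [b]) = 2 * gNum l + cond b 1 0 := by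
  simp [gNum, List.foldl_concat]

private theorem gNum_bounds : ∀ (l : List Bool) (a : ℕ),
    a * 2 ^ l.length ≤ l.foldl (fun a b => 2 * a + cond b 1 0) a ∧
    l.foldl (fun a b => 2 * a + cond b 1 0) a < (a + 1) * 2 ^ l.length := by
  intro l
  induction l with
  | nil => simp
  | cons b l ih =>
    intro a
    have hc : (cond b 1 0 : ℕ) ≤ 1 := by cases b <;> simp
    have := ih (2 * a + cond b 1 0)
    simp only [List.foldl_cons, List.length_cons] at *
    constructor
    · calc a * 2 ^ (l.length + 1) = (2 * a) * 2 ^ l.length := by ring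
        _ ≤ (2 * a + cond b 1 0) * 2 ^ l.length := by
            exact Nat.mul_le_mul_right _ (by omega)
        _ ≤ _ := this.1
    · calc _ < (2 * a + cond b 1 0 + 1) * 2 ^ l.length := this.2
        _ ≤ (2 * a + 2) * 2 ^ l.length := Nat.mul_le_mul_right _ (by omega)
        _ = (a + 1) * 2 ^ (l.length + 1) := by ring

private theorem gNum_lb (l : List Bool) : 2 ^ l.length ≤ gNum l := by
  simpa [gNum] using (gNum_bounds l 1).1

private theorem gNum_ub (l : List Bool) : gNum l < 2 ^ (l.length + 1) := by
  have := (gNum_bounds l 1).2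
  calc gNum l < (1 + 1) * 2 ^ l.length := this
    _ = 2 ^ (l.length + 1) := by ring

private theorem gNum_pos (l : List Bool) : 1 ≤ gNum l :=
  le_trans (Nat.one_le_two_pow) (gNum_lb l)

private theorem gNum_inj : ∀ (l₁ l₂ : List Bool), gNum l₁ = gNum l₂ → l₁ = l₂ := by
  intro l₁
  induction l₁ using List.reverseRecOn with
  | nil =>
    intro l₂ h
    rcases l₂.eq_nil_or_concat with rfl | ⟨l₂', b₂, rfl⟩
    · rfl
    · rw [List.concat_eq_append, gNum_concat] at h
      have := gNum_pos l₂'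
      have hc : (cond b₂ 1 0 : ℕ) ≤ 1 := by cases b₂ <;> simp
      have h0 : gNum ([] : List Bool) = 1 := rfl
      omega
  | append_singleton l₁' b₁ ih =>
    intro l₂ h
    rcases l₂.eq_nil_or_concat with rfl | ⟨l₂', b₂, rfl⟩
    · rw [gNum_concat] at h
      have := gNum_pos l₁'
      have hc : (cond b₁ 1 0 : ℕ) ≤ 1 := by cases b₁ <;> simp
      have h0 : gNum ([] : List Bool) = 1 := rfl
      omega
    · rw [List.concat_eq_append, gNum_concat, gNum_concat] at h
      have hb : b₁ = b₂ ∧ gNum l₁' = gNum l₂' := by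
        cases b₁ <;> cases b₂ <;> simp at h ⊢ <;> omega
      simp [List.concat_eq_append, hb.1, ih l₂' hb.2]

private def blkb (n i : ℕ) (b : Bool) : List (Option (Bool × Bool)) :=
  List.ofFn fun j : Fin n =>
    some (i.testBit (n - 1 - (j : ℕ)), if (j : ℕ) = 0 then b else false)

private theorem blockEnc_eq (n : ℕ) (z : List Bool) :
    blockEnc n z = List.intercalate [none]
      ((List.range z.length).map fun i => blkb n i (z.getD i false)) := rfl

private def PW (n : ℕ) (p : List Bool) : List (Option (Bool × Bool)) :=
  List.intercalate [none] ((List.range n).map fun i => blkb n i (p.getD i false)) ++ [none]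

private def SW (n : ℕ) (t : List Bool) : List (Option (Bool × Bool)) :=
  List.intercalate [none] ((List.range t.length).map fun i => blkb n (n + i) (t.getD i false))

private theorem blkb_length (n i : ℕ) (b : Bool) : (blkb n i b).length = n := by
  simp [blkb]

private theorem split_lemma (n : ℕ) (hn : 1 ≤ n) (p t : List Bool)
    (hp : p.length = n) (ht : t ≠ []) :
    blockEnc n (p ++ t) = PW n p ++ SW n t := by
  rw [blockEnc_eq, PW, SW]
  have hlen : (p ++ t).length = n + t.length := by simp [hp]
  rw [hlen, List.range_add, List.map_append, List.map_map,
    my_intercalate_append _ _ _ (by simp; omega) (by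
      simp only [ne_eq, List.map_eq_nil_iff, List.range_eq_nil]
      intro h; exact ht (List.length_eq_zero_iff.mp h))]
  congr 1
  · congr 1
    · congr 1
      apply List.map_congr_left
      intro i hi
      rw [List.getD_append _ _ _ _ (by rw [hp]; exact List.mem_range.mp hi)]
  · congr 1
    apply List.map_congr_left
    intro i _
    show blkb n (n + i) ((p ++ t).getD (n + i) false) = _
    rw [List.getD_append_right _ _ _ _ (by omega), hp, Nat.add_sub_cancel_left]

private theorem PW_length (n : ℕ) (hn : 1 ≤ n) (p : List Bool) :
    (PW n p).length = n * (n + 1) := by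
  rw [PW, List.length_append]
  rw [my_intercalate_length none n _ (by simp; omega)
    (by intro b hb; obtain ⟨i, _, rfl⟩ := List.mem_map.mp hb; exact blkb_length n i _)]
  simp only [List.length_map, List.length_range, List.length_singleton]
  have : 1 ≤ n * (n + 1) := Nat.one_le_iff_ne_zero.2 (by positivity)
  omega

private theorem SW_length (n : ℕ) (t : List Bool) (ht : t ≠ []) :
    (SW n t).length = t.length * (n + 1) - 1 := by
  rw [SW, my_intercalate_length none n _ (by
      simp only [ne_eq, List.map_eq_nil_iff, List.range_eq_nil]
      intro h; exact ht (List.length_eq_zero_iff.mp h))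
    (by intro b hb; obtain ⟨i, _, rfl⟩ := List.mem_map.mp hb; exact blkb_length n _ _)]
  simp

private theorem blockEnc_length (n : ℕ) (z : List Bool) (hz : z ≠ []) :
    (blockEnc n z).length = z.length * (n + 1) - 1 := by
  rw [blockEnc_eq, my_intercalate_length none n _ (by
      simp only [ne_eq, List.map_eq_nil_iff, List.range_eq_nil]
      intro h; exact hz (List.length_eq_zero_iff.mp h))
    (by intro b hb; obtain ⟨i, _, rfl⟩ := List.mem_map.mp hb; exact blkb_length n _ _)]
  simp

private theorem blockEnc_getD (n : ℕ) (hn : 1 ≤ n) (z : List Bool) (i : ℕ)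
    (hi : i < z.length) :
    (blockEnc n z).getD (i * (n + 1)) none
      = some (i.testBit (n - 1), z.getD i false) := by
  rw [blockEnc_eq]
  have h0 : (0 : ℕ) < n := hn
  have := my_intercalate_getD (none : Option (Bool × Bool)) none n
    ((List.range z.length).map fun i => blkb n i (z.getD i false)) i 0
    (by intro b hb; obtain ⟨k, _, rfl⟩ := List.mem_map.mp hb; exact blkb_length n _ _)
    (by simpa using hi) h0
  rw [Nat.add_zero] at this
  rw [this]
  have hgd : (((List.range z.length).map fun i => blkb n i (z.getD i false)).getD i [])
      = blkb n i (z.getD i false) := by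
    rw [List.getD_eq_getElem _ _ (by simpa using hi)]
    simp
  rw [hgd, blkb]
  rw [List.getD_eq_getElem _ _ (by simpa using h0)]
  simp

private theorem blockEnc_inj (n : ℕ) (hn : 1 ≤ n) (z z' : List Bool)
    (hz : z.length = 2 ^ n) (hz' : z'.length = 2 ^ n)
    (h : blockEnc n z = blockEnc n z') : z = z' := by
  apply List.ext_getElem (by rw [hz, hz'])
  intro i h1 h2
  have e1 := blockEnc_getD n hn z i h1
  have e2 := blockEnc_getD n hn z' i h2
  rw [h, e2] at e1
  have := (Prod.mk.injEq _ _ _ _).mp (Option.some.injEq _ _ ▸ e1.symm)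
  rw [List.getD_eq_getElem _ _ h1, List.getD_eq_getElem _ _ h2] at this
  exact this.2


private def binB (n i : ℕ) : List Bool := List.ofFn fun j : Fin n => i.testBit (n - 1 - (j : ℕ))

private theorem binB_length (n i : ℕ) : (binB n i).length = n := by simp [binB]

private theorem idxOf_binB (n i : ℕ) (hi : i < 2 ^ n) (t : List Bool) :
    idxOf (binB n i ++ t) n = i := by
  rw [idxOf, List.take_left' (binB_length n i)]
  have := numOf_testBit n i
  rw [Nat.mod_eq_of_lt hi] at this
  exact this

private theorem mem_iff (n : ℕ) (hn : 1 ≤ n) (i : ℕ) (hi : i < 2 ^ n - n)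
    (t : List Bool) (ht : t.length = 2 ^ n - n) :
    blockEnc n (binB n (n + i) ++ t) ∈ BlockL1 n ↔ t.getD i false = true := by
  have hnlt : n < 2 ^ n := Nat.lt_two_pow_self (n := n)
  have hzlen : (binB n (n + i) ++ t).length = 2 ^ n := by
    simp [binB_length, ht]; omega
  have hni : n + i < 2 ^ n := by omega
  have hgd : (binB n (n + i) ++ t).getD (n + i) false = t.getD i false := by
    rw [List.getD_append_right _ _ _ _ (by rw [binB_length]; omega), binB_length,
      Nat.add_sub_cancel_left]
  constructor
  · rintro ⟨z, hz, ⟨m, hm, hmt⟩, hweq⟩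
    have hzeq : z = binB n (n + i) ++ t := blockEnc_inj n hn z _ hz hzlen hweq.symm
    have hpow : (2:ℕ) ^ m = 2 ^ n := by rw [← hm, hzeq, hzlen]
    have hmn : m = n := Nat.pow_right_injective le_rfl hpow
    rw [hzeq, hmn, idxOf_binB n (n + i) hni, hgd] at hmt
    exact hmt
  · intro hti
    refine ⟨binB n (n + i) ++ t, hzlen, ⟨n, hzlen, ?_⟩, rfl⟩
    rw [idxOf_binB n (n + i) hni, hgd]
    exact hti

/-- One-way communication lower bound for `Block_n(L1)` with the split after
the first `n` blocks: any correct one-way protocol must, on some input of the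
appropriate length, use a message of at least `2^n − n` bits. -/
theorem blockL1_cc_lower_bound (n : ℕ) (hn : 1 ≤ n)
    (A : List (Option (Bool × Bool)) → List Bool → Bool)
    (B : List (Option (Bool × Bool)) → List Bool)
    (hcorrect : ∀ w : List (Option (Bool × Bool)),
      w.length = (n + 1) * 2 ^ n - 1 →
      ((A (w.take (n * (n + 1))) (B (w.drop (n * (n + 1)))) = true) ↔
        w ∈ BlockL1 n)) :
    ∃ w : List (Option (Bool × Bool)), w.length = (n + 1) * 2 ^ n - 1 ∧
      2 ^ n - n ≤ (B (w.drop (n * (n + 1)))).length := by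
  by_contra hcon
  push_neg at hcon
  set K := 2 ^ n - n with hK
  have hnlt : n < 2 ^ n := Nat.lt_two_pow_self (n := n)
  have hK1 : 1 ≤ K := by omega
  -- basic facts about our inputs
  have hne : ∀ t : Fin K → Bool, (List.ofFn t) ≠ [] := by
    intro t h
    have := congrArg List.length h
    simp at this
    omega
  have hw : ∀ (i : ℕ) (t : Fin K → Bool),
      blockEnc n (binB n (n + i) ++ List.ofFn t) = PW n (binB n (n + i)) ++ SW n (List.ofFn t) :=
    fun i t => split_lemma n hn _ _ (binB_length n _) (hne t)
  have hwlen : ∀ (i : ℕ) (t : Fin K → Bool),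
      (blockEnc n (binB n (n + i) ++ List.ofFn t)).length = (n + 1) * 2 ^ n - 1 := by
    intro i t
    rw [blockEnc_length n _ (by
      intro h
      have := congrArg List.length h
      simp [binB_length] at this
      omega)]
    simp only [List.length_append, binB_length, List.length_ofFn]
    have : n + K = 2 ^ n := by omega
    rw [this, mul_comm]
  have hdrop : ∀ (i : ℕ) (t : Fin K → Bool),
      (blockEnc n (binB n (n + i) ++ List.ofFn t)).drop (n * (n + 1)) = SW n (List.ofFn t) := by
    intro i t
    rw [hw i t, List.drop_left' (PW_length n hn _)]
  have htake : ∀ (i : ℕ) (t : Fin K → Bool),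
      (blockEnc n (binB n (n + i) ++ List.ofFn t)).take (n * (n + 1)) = PW n (binB n (n + i)) := by
    intro i t
    rw [hw i t, List.take_left' (PW_length n hn _)]
  set msg : (Fin K → Bool) → List Bool := fun t => B (SW n (List.ofFn t)) with hmsg
  have hmsglen : ∀ t, (msg t).length < K := by
    intro t
    have := hcon (blockEnc n (binB n (n + 0) ++ List.ofFn t)) (hwlen 0 t)
    rwa [hdrop 0 t] at this
  -- injectivity of msg
  have hmsginj : Function.Injective msg := by
    intro t1 t2 heq
    by_contra hne12
    obtain ⟨i, hi⟩ := Function.ne_iff.mp hne12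
    have hgetD : ∀ t : Fin K → Bool, (List.ofFn t).getD (i : ℕ) false = t i := by
      intro t
      rw [List.getD_eq_getElem _ _ (by simpa using i.isLt)]
      simp
    have h1 := (hcorrect _ (hwlen i t1))
    have h2 := (hcorrect _ (hwlen i t2))
    rw [htake, hdrop, mem_iff n hn i (by rw [← hK]; exact i.isLt) _ (by simp [hK]), hgetD] at h1
    rw [htake, hdrop, mem_iff n hn i (by rw [← hK]; exact i.isLt) _ (by simp [hK]), hgetD] at h2
    rw [show B (SW n (List.ofFn t1)) = msg t1 from rfl, heq] at h1
    rw [show B (SW n (List.ofFn t2)) = msg t2 from rfl] at h2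
    rw [h2] at h1
    exact hi (Bool.eq_iff_iff.mpr h1.symm)
  -- counting
  have hcard := Fintype.card_le_of_injective
    (fun t : Fin K → Bool => (⟨gNum (msg t) - 1, by
      have hub := gNum_ub (msg t)
      have hlb := gNum_pos (msg t)
      have hlen := hmsglen t
      have : 2 ^ ((msg t).length + 1) ≤ 2 ^ K := Nat.pow_le_pow_right (by norm_num) (by omega)
      omega⟩ : Fin (2 ^ K - 1)))
    (by
      intro t1 t2 h
      have hval := Fin.mk.injEq _ _ _ _ ▸ h
      have h1 := gNum_pos (msg t1)
      have h2 := gNum_pos (msg t2)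
      have : gNum (msg t1) = gNum (msg t2) := by
        have := Fin.val_eq_of_eq h
        simp only at this
        omega
      exact hmsginj (gNum_inj _ _ this))
  simp only [Fintype.card_fun, Fintype.card_bool, Fintype.card_fin] at hcard
  have h2K : 1 ≤ 2 ^ K := Nat.one_le_two_pow
  omega
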